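/- (Smoothing of digital payoffs by pre-integration.) Let X : ℝ × ℝ → ℝ be continuously differentiable with ∂_y X(y,z) ≥ ε for some ε > 0 and all (y,z), and assume that for each z, X(y,z) → +∞ as y → +∞ and X(y,z) → −∞ as y → −∞. Fix K ∈ ℝ. Then: (i) for each z there exists a unique y*(z) ∈ ℝ with X(y*(z), z) = K; (ii) y* is continuously differentiable with (y*)'(z) = − ∂_z X(y*(z), z) / ∂_y X(y*(z), z); (iii) the pre-integrated digital payoff h(z) := ∫_ℝ 1_{X(y,z) > K} φ(y) dy equals 1 − Φ(y*(z)), where Φ is the standard normal distribution function; and (iv) h is continuously differentiable with h'(z) = φ(y*(z)) · ∂_z X(y*(z), z) / ∂_y X(y*(z), z). -/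

import Mathlib

open MeasureTheory

/-- The standard normal density φ(y) = (2π)^{-1/2} exp(-y²/2). -/
noncomputable def stdGaussPDF (y : ℝ) : ℝ :=
  (Real.sqrt (2 * Real.pi))⁻¹ * Real.exp (-y^2/2)

/-- smoothing of digital payoffs by pre-integration: under monotonicity
(`∂_y X ≥ ε > 0`) and growth conditions, (i) for each `z` there is a unique root
`y*(z)` of `X(·,z) = K`; (ii) `y*` is continuously differentiable with
`(y*)'(z) = -∂_z X(y*(z),z)/∂_y X(y*(z),z)`; (iii) the pre-integrated digital payoff
`h(z) = ∫ 1_{X(y,z)>K} φ(y) dy` equals `1 - Φ(y*(z))`; (iv) `h` is continuously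
differentiable with `h'(z) = φ(y*(z)) ∂_z X(y*(z),z)/∂_y X(y*(z),z)`. -/
theorem digital_preintegration_smoothing (X : ℝ → ℝ → ℝ)
    (hX : ContDiff ℝ 1 fun q : ℝ × ℝ => X q.1 q.2)
    (ε : ℝ) (hε : 0 < ε) (hXy : ∀ y z, ε ≤ deriv (fun y' => X y' z) y)
    (htop : ∀ z, Filter.Tendsto (fun y => X y z) Filter.atTop Filter.atTop)
    (hbot : ∀ z, Filter.Tendsto (fun y => X y z) Filter.atBot Filter.atBot)
    (K : ℝ) :
    ∃ ystar : ℝ → ℝ,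
      (∀ z, X (ystar z) z = K) ∧
      (∀ z y, X y z = K → y = ystar z) ∧
      ContDiff ℝ 1 ystar ∧
      (∀ z, deriv ystar z =
        -(deriv (fun z' => X (ystar z) z') z) / deriv (fun y => X y z) (ystar z)) ∧
      (∀ z, (∫ y : ℝ, if K < X y z then stdGaussPDF y else 0) =
        1 - ∫ y in Set.Iic (ystar z), stdGaussPDF y) ∧
      ContDiff ℝ 1 (fun z => ∫ y : ℝ, if K < X y z then stdGaussPDF y else 0) ∧
      (∀ z, deriv (fun z' => ∫ y : ℝ, if K < X y z' then stdGaussPDF y else 0) z =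
        stdGaussPDF (ystar z) *
          deriv (fun z' => X (ystar z) z') z / deriv (fun y => X y z) (ystar z)) := by
  classical
  set Xf : ℝ × ℝ → ℝ := fun q => X q.1 q.2 with hXfdef
  have hXd : Differentiable ℝ Xf := hX.differentiable one_ne_zero
  have hpy : ∀ y z, HasDerivAt (fun y' => X y' z) (fderiv ℝ Xf (y, z) (1, 0)) y := by
    intro y z
    have h1 : HasDerivAt (fun y' : ℝ => ((y' : ℝ), z)) ((1:ℝ), (0:ℝ)) y :=
      (hasDerivAt_id y).prodMk (hasDerivAt_const y z)
    exact ((hXd (y, z)).hasFDerivAt).comp_hasDerivAt y h1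
  have hpz : ∀ y z, HasDerivAt (fun z' => X y z') (fderiv ℝ Xf (y, z) (0, 1)) z := by
    intro y z
    have h1 : HasDerivAt (fun z' : ℝ => ((y : ℝ), z')) ((0:ℝ), (1:ℝ)) z :=
      (hasDerivAt_const z y).prodMk (hasDerivAt_id z)
    exact ((hXd (y, z)).hasFDerivAt).comp_hasDerivAt z h1
  have hb : ∀ y z, ε ≤ fderiv ℝ Xf (y, z) (1, 0) := by
    intro y z; rw [← (hpy y z).deriv]; exact hXy y z
  have hsm : ∀ z, StrictMono (fun y => X y z) := by
    intro z
    exact strictMono_of_deriv_pos fun y => lt_of_lt_of_le hε (hXy y z)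
  have hcont : ∀ z, Continuous (fun y => X y z) := fun z =>
    hX.continuous.comp (continuous_id.prodMk continuous_const)
  have hex : ∀ z, ∃ y, X y z = K := fun z => (hcont z).surjective (htop z) (hbot z) K
  choose ystar hroot using hex
  have huniq : ∀ z y, X y z = K → y = ystar z := fun z y h =>
    (hsm z).injective (h.trans (hroot z).symm)
  -- invertible derivative of F := (Xf, snd)
  set F : ℝ × ℝ → ℝ × ℝ := fun q => (Xf q, q.2) with hFdef
  have hFc : ContDiff ℝ 1 F := hX.prodMk contDiff_snd
  have hE : ∀ q : ℝ × ℝ, ∃ e : (ℝ × ℝ) ≃L[ℝ] (ℝ × ℝ),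
      (e : (ℝ × ℝ) →L[ℝ] (ℝ × ℝ)) = (fderiv ℝ Xf q).prod (ContinuousLinearMap.snd ℝ ℝ ℝ) := by
    intro q
    set B := (fderiv ℝ Xf q).prod (ContinuousLinearMap.snd ℝ ℝ ℝ) with hB
    have hq : ε ≤ fderiv ℝ Xf q (1, 0) := by
      have := hb q.1 q.2; simpa using this
    have hinj : Function.Injective B := by
      intro p p' hpp
      obtain ⟨h1, h2⟩ := Prod.ext_iff.mp hpp
      simp only [hB, ContinuousLinearMap.prod_apply, ContinuousLinearMap.coe_snd'] at h1 h2
      have hd : fderiv ℝ Xf q (p - p') = 0 := by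
        rw [map_sub, h1, sub_self]
      have hdec : (p - p' : ℝ × ℝ) = (p.1 - p'.1) • ((1:ℝ), (0:ℝ)) := by
        ext
        · simp
        · simp [h2]
      rw [hdec, ContinuousLinearMap.map_smul, smul_eq_mul] at hd
      have h1' : p.1 - p'.1 = 0 := by
        rcases mul_eq_zero.mp hd with h | h
        · exact h
        · exfalso; rw [h] at hq; linarith
      exact Prod.ext (by linarith) h2
    have hbij : Function.Bijective B :=
      ⟨hinj, LinearMap.injective_iff_surjective.mp hinj⟩
    exact ⟨(LinearEquiv.ofBijective (B : (ℝ×ℝ) →ₗ[ℝ] (ℝ×ℝ)) hbij).toContinuousLinearEquiv,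
      ContinuousLinearMap.ext fun p => rfl⟩
  -- ystar is C¹
  have hycd : ContDiff ℝ 1 ystar := by
    rw [contDiff_iff_contDiffAt]
    intro z₀
    set q₀ : ℝ × ℝ := (ystar z₀, z₀) with hq₀
    obtain ⟨e, he⟩ := hE q₀
    have hXs : HasStrictFDerivAt Xf (fderiv ℝ Xf q₀) q₀ :=
      hX.contDiffAt.hasStrictFDerivAt one_ne_zero
    have hFs : HasStrictFDerivAt F (e : (ℝ × ℝ) →L[ℝ] (ℝ × ℝ)) q₀ := by
      rw [he]
      exact hXs.prodMk (ContinuousLinearMap.snd ℝ ℝ ℝ).hasStrictFDerivAt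
    have hFq₀ : F q₀ = (K, z₀) := by
      simp only [hFdef, hq₀]
      exact Prod.ext (hroot z₀) rfl
    set g : ℝ × ℝ → ℝ × ℝ := hFs.localInverse F e q₀ with hgdef
    have hg : ContDiffAt ℝ 1 g (K, z₀) := by
      rw [← hFq₀]
      exact hFc.contDiffAt.to_localInverse hFs.hasFDerivAt one_ne_zero
    have hri : ∀ᶠ p in nhds (K, z₀), F (g p) = p := by
      rw [← hFq₀]; exact hFs.eventually_right_inverse
    have htend : Filter.Tendsto (fun z : ℝ => ((K : ℝ), z)) (nhds z₀) (nhds ((K:ℝ), z₀)) :=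
      (continuous_const.prodMk continuous_id).tendsto z₀
    have hev : ∀ᶠ z in nhds z₀, ystar z = (g (K, z)).1 := by
      filter_upwards [htend.eventually hri] with z hz
      have h1 : X (g (K, z)).1 (g (K, z)).2 = K := congrArg Prod.fst hz
      have h2 : (g (K, z)).2 = z := congrArg Prod.snd hz
      rw [h2] at h1
      exact (huniq z _ h1).symm
    have hgz : ContDiffAt ℝ 1 (fun z : ℝ => (g (K, z)).1) z₀ := by
      have hinner : ContDiffAt ℝ 1 (fun z : ℝ => ((K : ℝ), z)) z₀ :=
        (contDiff_const.prodMk contDiff_id).contDiffAt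
      exact contDiff_fst.contDiffAt.comp _ (hg.comp z₀ hinner)
    exact hgz.congr_of_eventuallyEq hev
  -- derivative formula for ystar
  have hyd : ∀ z, HasDerivAt ystar (deriv ystar z) z := fun z =>
    ((hycd.differentiable one_ne_zero) z).hasDerivAt
  have hkey : ∀ z, deriv ystar z * fderiv ℝ Xf (ystar z, z) (1, 0)
      + fderiv ℝ Xf (ystar z, z) (0, 1) = 0 := by
    intro z
    have hpair : HasDerivAt (fun z' => (ystar z', z')) ((deriv ystar z, 1)) z :=
      (hyd z).prodMk (hasDerivAt_id z)
    have hcomp := ((hXd (ystar z, z)).hasFDerivAt).comp_hasDerivAt_of_eq z hpair rfl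
    have hconst : Xf ∘ (fun z' => (ystar z', z')) = fun _ => K := funext fun z' => hroot z'
    rw [hconst] at hcomp
    have h0 : fderiv ℝ Xf (ystar z, z) (deriv ystar z, 1) = 0 :=
      hcomp.unique (hasDerivAt_const z K)
    have hdec : ((deriv ystar z : ℝ), (1:ℝ))
        = deriv ystar z • ((1:ℝ), (0:ℝ)) + ((0:ℝ), (1:ℝ)) := by
      ext <;> simp
    rw [hdec, map_add, ContinuousLinearMap.map_smul, smul_eq_mul] at h0
    linarith [h0]
  have hbne : ∀ z, deriv (fun y => X y z) (ystar z) ≠ 0 := by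
    intro z
    rw [(hpy (ystar z) z).deriv]
    have := hb (ystar z) z; linarith
  have hderiv_ystar : ∀ z, deriv ystar z =
      -(deriv (fun z' => X (ystar z) z') z) / deriv (fun y => X y z) (ystar z) := by
    intro z
    rw [(hpy (ystar z) z).deriv, (hpz (ystar z) z).deriv]
    have h := hkey z
    have hbpos : (0:ℝ) < fderiv ℝ Xf (ystar z, z) (1, 0) := lt_of_lt_of_le hε (hb _ _)
    field_simp
    linarith
  -- Gaussian facts
  have hgauss_eq : stdGaussPDF = fun y => (Real.sqrt (2 * Real.pi))⁻¹ * Real.exp (-(1/2) * y^2) := by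
    funext y; unfold stdGaussPDF; ring_nf
  have hint : Integrable stdGaussPDF := by
    rw [hgauss_eq]
    exact (integrable_exp_neg_mul_sq (by norm_num : (0:ℝ) < 1/2)).const_mul _
  have htotal : ∫ y, stdGaussPDF y = 1 := by
    rw [hgauss_eq, integral_const_mul, integral_gaussian]
    rw [show Real.pi / (1/2) = 2 * Real.pi by ring, inv_mul_cancel₀]
    positivity
  have hgc : Continuous stdGaussPDF := by unfold stdGaussPDF; fun_prop
  -- (iii)
  have hiii : ∀ z, (∫ y : ℝ, if K < X y z then stdGaussPDF y else 0) =
      1 - ∫ y in Set.Iic (ystar z), stdGaussPDF y := by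
    intro z
    have hiff : ∀ y, (K < X y z) ↔ (ystar z < y) := by
      intro y
      rw [← hroot z]
      exact (hsm z).lt_iff_lt
    have hind : (fun y => if K < X y z then stdGaussPDF y else 0)
        = (Set.Ioi (ystar z)).indicator stdGaussPDF := by
      funext y
      rw [Set.indicator_apply]
      exact if_congr (by rw [hiff y, Set.mem_Ioi]) rfl rfl
    rw [hind, integral_indicator measurableSet_Ioi]
    have hsplit := integral_add_compl (measurableSet_Iic (a := ystar z)) hint (f := stdGaussPDF)
    rw [Set.compl_Iic] at hsplit
    rw [htotal] at hsplit
    linarith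
  -- Φ and its derivative
  set Φ : ℝ → ℝ := fun t => ∫ y in Set.Iic t, stdGaussPDF y with hΦdef
  have hΦd : ∀ t, HasDerivAt Φ (stdGaussPDF t) t := by
    intro t
    have key : Φ = fun t => (∫ y in Set.Iic (0:ℝ), stdGaussPDF y)
        + ∫ y in (0:ℝ)..t, stdGaussPDF y := by
      funext s
      have := intervalIntegral.integral_Iic_sub_Iic (hint.integrableOn (s := Set.Iic (0:ℝ)))
        (hint.integrableOn (s := Set.Iic s))
      simp only [hΦdef]
      linarith
    rw [key]
    exact ((hgc.integral_hasStrictDerivAt 0 t).hasDerivAt).const_add _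
  have hΦcd : ContDiff ℝ 1 Φ := by
    rw [contDiff_one_iff_deriv]
    refine ⟨fun t => (hΦd t).differentiableAt, ?_⟩
    have : deriv Φ = stdGaussPDF := funext fun t => (hΦd t).deriv
    rw [this]; exact hgc
  have hfun : (fun z => ∫ y : ℝ, if K < X y z then stdGaussPDF y else 0)
      = fun z => 1 - Φ (ystar z) := funext fun z => hiii z
  refine ⟨ystar, hroot, huniq, hycd, hderiv_ystar, hiii, ?_, ?_⟩
  · rw [hfun]
    exact contDiff_const.sub (hΦcd.comp hycd)
  · intro z
    rw [hfun]
    have hcomp : HasDerivAt (fun z' => Φ (ystar z')) (stdGaussPDF (ystar z) * deriv ystar z) z :=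
      (hΦd (ystar z)).comp z (hyd z)
    have hfull : HasDerivAt (fun z' => 1 - Φ (ystar z'))
        (-(stdGaussPDF (ystar z) * deriv ystar z)) z := by
      have h := (hasDerivAt_const z (1:ℝ)).sub hcomp
      rwa [zero_sub] at h
    rw [hfull.deriv, hderiv_ystar z]
    have hb0 : deriv (fun y => X y z) (ystar z) ≠ 0 := hbne z
    field_simp
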